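/- Let X be a finite set of distinct points spanning P^n over an algebraically closed field k, with n ≥ 2. Suppose X lies on the union P^k ∪ P^r of two linear subspaces with k, r ≥ 1 and k + r = n, neither containing X. Then the homogeneous ideal I(X) contains at least k·r linearly independent quadrics of rank ≤ 2 (products of two linear forms). -/

import Mathlib

open MvPolynomial Module Submodule

noncomputable def linToPoly {n : ℕ} {K : Type*} [Field K]
    (φ : Module.Dual K (Fin n → K)) : MvPolynomial (Fin n) K :=
  ∑ i, C (φ (Pi.single i 1)) * X i

lemma linToPoly_isHomogeneous {n : ℕ} {K : Type*} [Field K]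
    (φ : Module.Dual K (Fin n → K)) : (linToPoly φ).IsHomogeneous 1 := by
  apply IsHomogeneous.sum
  intro i _
  simpa using (isHomogeneous_C (Fin n) (φ (Pi.single i 1))).mul (isHomogeneous_X K i)

lemma eval_linToPoly {n : ℕ} {K : Type*} [Field K]
    (φ : Module.Dual K (Fin n → K)) (x : Fin n → K) :
    eval x (linToPoly φ) = φ x := by
  conv_rhs => rw [← Finset.univ_sum_single x]
  rw [linToPoly, map_sum, map_sum]
  refine Finset.sum_congr rfl fun i _ => ?_
  have h1 : Pi.single i (x i) = x i • (Pi.single i 1 : Fin n → K) := by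
    ext j
    by_cases h : j = i <;> simp [h, Pi.single_apply]
  rw [h1, map_smul, eval_mul, eval_C, eval_X, smul_eq_mul, mul_comm]

lemma exists_dual_vectors {K V ι : Type*} [Field K] [AddCommGroup V] [Module K V]
    [FiniteDimensional K V] [Fintype ι] [DecidableEq ι]
    {F : ι → Module.Dual K V} (hF : LinearIndependent K F) :
    ∃ v : ι → V, ∀ k l, F k (v l) = if k = l then 1 else 0 := by
  set Φ : V →ₗ[K] (ι → K) := LinearMap.pi F with hΦ
  have hker : LinearMap.ker Φ = (span K (Set.range F)).dualCoannihilator := by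
    ext x
    simp only [LinearMap.mem_ker, Submodule.mem_dualCoannihilator]
    constructor
    · intro h φ hφ
      induction hφ using Submodule.span_induction with
      | mem φ hφ =>
        obtain ⟨i, rfl⟩ := hφ
        exact congrFun h i
      | zero => simp
      | add _ _ _ _ h1 h2 => simp [h1, h2]
      | smul c _ _ h1 => simp [h1]
    · intro h
      funext i
      exact h (F i) (Submodule.subset_span ⟨i, rfl⟩)
  have hsp : finrank K (span K (Set.range F)) = Fintype.card ι :=
    finrank_span_eq_card hF
  have h1 := Subspace.finrank_add_finrank_dualCoannihilator_eq (span K (Set.range F))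
  have h2 := LinearMap.finrank_range_add_finrank_ker Φ
  rw [hker] at h2
  have hrange : LinearMap.range Φ = ⊤ := by
    apply Submodule.eq_top_of_finrank_eq
    rw [Module.finrank_fintype_fun_eq_card]
    omega
  have hsurj : Function.Surjective Φ := LinearMap.range_eq_top.mp hrange
  choose v hv using fun l => hsurj (Pi.single l 1)
  refine ⟨v, fun k l => ?_⟩
  have := congrFun (hv l) k
  rw [hΦ] at this
  simpa [LinearMap.pi_apply, Pi.single_apply] using this

set_option maxSynthPendingDepth 2 in
theorem stmt_18 {K : Type*} [Field K] [IsAlgClosed K] (n a b : ℕ) (hn : 2 ≤ n)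
    (ha : 1 ≤ a) (hb : 1 ≤ b) (hab : a + b = n)
    (Xs : Finset (Fin (n + 1) → K)) (h0 : (0 : Fin (n + 1) → K) ∉ Xs)
    (hspan : Submodule.span K (Xs : Set (Fin (n + 1) → K)) = ⊤)
    (W₁ W₂ : Submodule K (Fin (n + 1) → K))
    (hW₁ : Module.finrank K W₁ = a + 1) (hW₂ : Module.finrank K W₂ = b + 1)
    (hsub : ∀ P ∈ Xs, P ∈ W₁ ∨ P ∈ W₂)
    (hnc1 : ¬ ∀ P ∈ Xs, P ∈ W₁) (hnc2 : ¬ ∀ P ∈ Xs, P ∈ W₂) :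
    ∃ Q : Fin (a * b) → MvPolynomial (Fin (n + 1)) K,
      LinearIndependent K Q ∧
      (∀ t : Fin (a * b), ∃ g h : MvPolynomial (Fin (n + 1)) K,
        g.IsHomogeneous 1 ∧ h.IsHomogeneous 1 ∧ Q t = g * h) ∧
      ∀ t : Fin (a * b), ∀ P ∈ Xs, eval P (Q t) = 0 := by
  classical
  have hVfr : finrank K (Fin (n + 1) → K) = n + 1 := by
    simp [Module.finrank_fintype_fun_eq_card]
  have hsup : W₁ ⊔ W₂ = ⊤ := by
    rw [eq_top_iff, ← hspan]
    refine Submodule.span_le.mpr fun P hP => ?_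
    rcases hsub P hP with h | h
    · exact Submodule.mem_sup_left h
    · exact Submodule.mem_sup_right h
  have hann : W₁.dualAnnihilator ⊓ W₂.dualAnnihilator = ⊥ := by
    rw [← Submodule.dualAnnihilator_sup_eq, hsup, Submodule.dualAnnihilator_top]
  haveI : FiniteDimensional K (Module.Dual K (Fin (n + 1) → K)) :=
    Subspace.instModuleDualFiniteDimensional
  have fr1 : finrank K W₁.dualAnnihilator = b := by
    have h1 := Submodule.finrank_quotient_add_finrank W₁
    have h2 := LinearEquiv.finrank_eq (R := K) (M := (Fin (n + 1) → K) ⧸ W₁)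
      (N := W₁.dualAnnihilator) (Subspace.quotEquivAnnihilator W₁)
    omega
  have fr2 : finrank K W₂.dualAnnihilator = a := by
    have h1 := Submodule.finrank_quotient_add_finrank W₂
    have h2 := LinearEquiv.finrank_eq (R := K) (M := (Fin (n + 1) → K) ⧸ W₂)
      (N := W₂.dualAnnihilator) (Subspace.quotEquivAnnihilator W₂)
    omega
  let BG : Basis (Fin a) K W₂.dualAnnihilator := Module.finBasisOfFinrankEq K _ fr2
  let BH : Basis (Fin b) K W₁.dualAnnihilator := Module.finBasisOfFinrankEq K _ fr1
  let G : Fin a → Module.Dual K (Fin (n + 1) → K) := fun i => (BG i : Module.Dual K (Fin (n + 1) → K))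
  let H : Fin b → Module.Dual K (Fin (n + 1) → K) := fun j => (BH j : Module.Dual K (Fin (n + 1) → K))
  have hGmem : ∀ i, G i ∈ W₂.dualAnnihilator := fun i => (BG i).2
  have hHmem : ∀ j, H j ∈ W₁.dualAnnihilator := fun j => (BH j).2
  have hGspan : span K (Set.range G) = W₂.dualAnnihilator := by
    have h : Set.range G = W₂.dualAnnihilator.subtype '' Set.range ⇑BG := by
      rw [← Set.range_comp]; rfl
    rw [h, Submodule.span_image, BG.span_eq, Submodule.map_top, Submodule.range_subtype]
  have hHspan : span K (Set.range H) = W₁.dualAnnihilator := by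
    have h : Set.range H = W₁.dualAnnihilator.subtype '' Set.range ⇑BH := by
      rw [← Set.range_comp]; rfl
    rw [h, Submodule.span_image, BH.span_eq, Submodule.map_top, Submodule.range_subtype]
  have hGli : LinearIndependent K G :=
    BG.linearIndependent.map' W₂.dualAnnihilator.subtype (Submodule.ker_subtype _)
  have hHli : LinearIndependent K H :=
    BH.linearIndependent.map' W₁.dualAnnihilator.subtype (Submodule.ker_subtype _)
  have hF : LinearIndependent K (Sum.elim G H) := by
    refine hGli.sum_type hHli ?_
    rw [hGspan, hHspan, disjoint_iff, inf_comm, hann]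
  obtain ⟨v, hv⟩ := exists_dual_vectors hF
  let e : Fin (a * b) ≃ Fin a × Fin b := finProdFinEquiv.symm
  let Q : Fin (a * b) → MvPolynomial (Fin (n + 1)) K := fun t =>
    linToPoly (G (e t).1) * linToPoly (H (e t).2)
  have hevalQ : ∀ t (x : Fin (n + 1) → K), eval x (Q t) = G (e t).1 x * H (e t).2 x := by
    intro t x
    rw [eval_mul, eval_linToPoly, eval_linToPoly]
  refine ⟨Q, ?_, ?_, ?_⟩
  · rw [Fintype.linearIndependent_iff]
    intro c hc t
    have hx := congrArg (eval (v (Sum.inl (e t).1) + v (Sum.inr (e t).2))) hc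
    rw [map_sum, map_zero] at hx
    set x := v (Sum.inl (e t).1) + v (Sum.inr (e t).2) with hxdef
    have key : ∀ t', eval x (c t' • Q t') =
        c t' * ((if (e t').1 = (e t).1 then (1:K) else 0) *
          (if (e t').2 = (e t).2 then (1:K) else 0)) := by
      intro t'
      rw [smul_eq_C_mul, eval_mul, eval_C, hevalQ]
      congr 1
      have hG : G (e t').1 x = if (e t').1 = (e t).1 then (1:K) else 0 := by
        rw [hxdef, map_add]
        have h1 := hv (Sum.inl (e t').1) (Sum.inl (e t).1)
        have h2 := hv (Sum.inl (e t').1) (Sum.inr (e t).2)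
        simp only [Sum.elim_inl] at h1 h2
        rw [h1, h2]
        simp [Sum.inl.injEq]
      have hH : H (e t').2 x = if (e t').2 = (e t).2 then (1:K) else 0 := by
        rw [hxdef, map_add]
        have h1 := hv (Sum.inr (e t').2) (Sum.inr (e t).2)
        have h2 := hv (Sum.inr (e t').2) (Sum.inl (e t).1)
        simp only [Sum.elim_inr] at h1 h2
        rw [h1, h2]
        simp [Sum.inr.injEq]
      rw [hG, hH]
    rw [Finset.sum_congr rfl (fun t' _ => key t')] at hx
    rw [Finset.sum_eq_single t] at hx
    · simpa using hx
    · intro t' _ hne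
      have hne' : e t' ≠ e t := fun h => hne (e.injective h)
      by_cases h1 : (e t').1 = (e t).1
      · have h2 : (e t').2 ≠ (e t).2 := fun h2 => hne' (Prod.ext h1 h2)
        simp [h2]
      · simp [h1]
    · intro h
      exact absurd (Finset.mem_univ t) h
  · intro t
    exact ⟨linToPoly (G (e t).1), linToPoly (H (e t).2),
      linToPoly_isHomogeneous _, linToPoly_isHomogeneous _, rfl⟩
  · intro t P hP
    rw [hevalQ]
    rcases hsub P hP with h | h
    · rw [(Submodule.mem_dualAnnihilator _).mp (hHmem (e t).2) P h, mul_zero]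
    · rw [(Submodule.mem_dualAnnihilator _).mp (hGmem (e t).1) P h, zero_mul]
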